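/- Multiplication computes prefix sums in words: let w, ℓ be naturals with ℓ ≤ w, and let X = Σ_{j=0}^{ℓ-1} x_j · 2^{w·j} with each x_j < 2^{w-1}/ℓ (so that no carries across word boundaries occur). Let C = Σ_{j=0}^{ℓ-1} 2^{w·j}. Then for each 0 ≤ j < ℓ, the j-th w-bit word of the product X · C (i.e., ⌊(X·C)/2^{w·j}⌋ mod 2^w) equals the prefix sum x_0 + x_1 + ... + x_j. -/

import Mathlib

open Finset

lemma digits_sum_lt_pow (b j : ℕ) (c : ℕ → ℕ) (hb : ∀ m < j, c m < b) :
    ∑ m ∈ range j, c m * b ^ m < b ^ j := by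
  induction j with
  | zero => simp
  | succ n ih =>
    have h1 : ∑ m ∈ range n, c m * b ^ m < b ^ n :=
      ih (fun m hm => hb m (hm.trans (Nat.lt_succ_self n)))
    have h2 : c n < b := hb n (Nat.lt_succ_self n)
    rw [sum_range_succ]
    calc ∑ m ∈ range n, c m * b ^ m + c n * b ^ n
        < b ^ n + c n * b ^ n := by omega
      _ = (1 + c n) * b ^ n := by ring
      _ ≤ b * b ^ n := Nat.mul_le_mul_right _ (by omega)
      _ = b ^ (n + 1) := by ring

theorem mul_computes_prefix_sums (w ℓ : ℕ) (hℓ : ℓ ≤ w) (x : ℕ → ℕ)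
    (hx : ∀ j < ℓ, x j < 2 ^ (w - 1) / ℓ) :
    ∀ j < ℓ,
      ((∑ k ∈ Finset.range ℓ, x k * 2 ^ (w * k)) * (∑ k ∈ Finset.range ℓ, 2 ^ (w * k)))
          / 2 ^ (w * j) % 2 ^ w = ∑ k ∈ Finset.range (j + 1), x k := by
  intro j hj
  have hℓ0 : 0 < ℓ := by omega
  set b := 2 ^ w with hbdef
  have hb2 : 2 ≤ b := by
    have : 2 ^ 1 ≤ 2 ^ w := Nat.pow_le_pow_right (by norm_num) (by omega)
    simpa using this
  -- total sum bound
  have hSlt : ∑ i ∈ range ℓ, x i < 2 ^ (w - 1) := by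
    calc ∑ i ∈ range ℓ, x i < ∑ _i ∈ range ℓ, 2 ^ (w - 1) / ℓ :=
          Finset.sum_lt_sum_of_nonempty (Finset.nonempty_range_iff.mpr (by omega)) (fun i hi => hx i (mem_range.mp hi))
      _ = ℓ * (2 ^ (w - 1) / ℓ) := by rw [Finset.sum_const, card_range, smul_eq_mul]
      _ ≤ 2 ^ (w - 1) := by
          rw [mul_comm]; exact Nat.div_mul_le_self _ _
  have hSb : ∑ i ∈ range ℓ, x i < b := by
    have : (2 : ℕ) ^ (w - 1) ≤ 2 ^ w := Nat.pow_le_pow_right (by norm_num) (Nat.sub_le w 1)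
    omega
  have hpow : ∀ k, 2 ^ (w * k) = b ^ k := fun k => by rw [hbdef, ← pow_mul]
  set c : ℕ → ℕ := fun m =>
    ∑ p ∈ (range ℓ ×ˢ range ℓ).filter (fun p => p.1 + p.2 = m), x p.1 with hc
  -- the convolution identity
  have key : (∑ k ∈ range ℓ, x k * 2 ^ (w * k)) * (∑ k ∈ range ℓ, 2 ^ (w * k)) =
      ∑ m ∈ range (2 * ℓ), c m * b ^ m := by
    simp only [hpow]
    have hmaps : ∀ p ∈ range ℓ ×ˢ range ℓ, p.1 + p.2 ∈ range (2 * ℓ) := by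
      intro p hp
      simp only [mem_product, mem_range] at hp ⊢
      omega
    calc (∑ k ∈ range ℓ, x k * b ^ k) * ∑ k ∈ range ℓ, b ^ k
        = ∑ p ∈ range ℓ ×ˢ range ℓ, x p.1 * b ^ p.1 * b ^ p.2 := by
          rw [Finset.sum_mul_sum, Finset.sum_product]
      _ = ∑ m ∈ range (2 * ℓ), c m * b ^ m := by
          rw [← Finset.sum_fiberwise_of_maps_to hmaps (fun p => x p.1 * b ^ p.1 * b ^ p.2)]
          refine Finset.sum_congr rfl (fun m _ => ?_)
          simp only [hc]
          rw [Finset.sum_mul]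
          refine Finset.sum_congr rfl (fun p hp => ?_)
          simp only [mem_filter] at hp
          rw [← hp.2, pow_add]
          ring
  -- each coefficient is at most the total sum
  have hcle : ∀ m, c m < b := by
    intro m
    have hinj : ∀ p ∈ (range ℓ ×ˢ range ℓ).filter (fun p => p.1 + p.2 = m),
        ∀ q ∈ (range ℓ ×ˢ range ℓ).filter (fun p => p.1 + p.2 = m),
        p.1 = q.1 → p = q := by
      intro p hp q hq h
      simp only [mem_filter] at hp hq
      have : p.2 = q.2 := by omega
      exact Prod.ext h this
    have h1 : c m = ∑ i ∈ ((range ℓ ×ˢ range ℓ).filter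
        (fun p => p.1 + p.2 = m)).image Prod.fst, x i := by
      simp only [hc]
      rw [Finset.sum_image hinj]
    have h2 : ((range ℓ ×ˢ range ℓ).filter (fun p => p.1 + p.2 = m)).image Prod.fst
        ⊆ range ℓ := by
      intro i hi
      simp only [mem_image, mem_filter, mem_product, mem_range] at hi ⊢
      obtain ⟨p, ⟨⟨h1, _⟩, _⟩, rfl⟩ := hi
      exact h1
    calc c m = _ := h1
      _ ≤ ∑ i ∈ range ℓ, x i := Finset.sum_le_sum_of_subset h2
      _ < b := hSb
  -- coefficient j is the prefix sum
  have hcj : c j = ∑ k ∈ range (j + 1), x k := by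
    have hset : (range ℓ ×ˢ range ℓ).filter (fun p => p.1 + p.2 = j) =
        (range (j + 1)).image (fun i => (i, j - i)) := by
      ext p
      simp only [mem_filter, mem_product, mem_range, mem_image, Prod.ext_iff]
      constructor
      · rintro ⟨⟨h1, h2⟩, h3⟩
        exact ⟨p.1, by omega, rfl, by omega⟩
      · rintro ⟨i, hi, h1, h2⟩
        omega
    simp only [hc]
    rw [hset, Finset.sum_image (by intro a _ b _ h; exact (Prod.ext_iff.mp h).1)]
  -- decompose the sum
  obtain ⟨r, hr⟩ : ∃ r, 2 * ℓ = (j + 1) + r := ⟨2 * ℓ - (j + 1), by omega⟩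
  have hsplit : ∑ m ∈ range (2 * ℓ), c m * b ^ m =
      (∑ m ∈ range j, c m * b ^ m) + b ^ j * (c j + b *
        (∑ i ∈ range r, c (j + 1 + i) * b ^ i)) := by
    rw [hr, Finset.sum_range_add, sum_range_succ]
    have hh : ∑ i ∈ range r, c (j + 1 + i) * b ^ (j + 1 + i)
        = b ^ j * (b * ∑ i ∈ range r, c (j + 1 + i) * b ^ i) := by
      rw [Finset.mul_sum, Finset.mul_sum]
      refine Finset.sum_congr rfl (fun i _ => ?_)
      rw [pow_add, pow_succ]
      ring
    rw [hh]
    ring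
  have hL : ∑ m ∈ range j, c m * b ^ m < b ^ j :=
    digits_sum_lt_pow b j c (fun m _ => hcle m)
  rw [hpow, key, hsplit]
  have hbj : 0 < b ^ j := Nat.pow_pos (by omega)
  rw [Nat.add_mul_div_left _ _ hbj, Nat.div_eq_of_lt hL, zero_add,
    Nat.add_mul_mod_self_left, Nat.mod_eq_of_lt (by calc c j < b := hcle j), hcj]
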